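/- The kernel of A^t − E, where A is the m×m involutive matrix with entries a_{k,j} = (-1)^{m-k-1} C(m-j, k-j) for j ≤ k, has dimension ⌊(m+1)/2⌋ over ℚ. -/

import Mathlib

open Finset
open scoped Matrix

/-- The lower-triangular matrix with entries `a_{k,j} = (-1)^{m-k-1} C(m-j, k-j)` for `j ≤ k`. -/
def matAQ (m : ℕ) : Matrix (Fin m) (Fin m) ℚ := fun k j =>
  if (j : ℕ) ≤ (k : ℕ) then
    (-1 : ℚ) ^ (m - (k : ℕ) - 1) * ((m - (j : ℕ)).choose ((k : ℕ) - (j : ℕ)) : ℚ)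
  else 0

lemma keySum (m i j : ℕ) (hi : i < m) (hj : j ≤ i) :
    ∑ k ∈ Finset.Icc j i,
      ((-1:ℚ)^(m-i-1) * ((m-k).choose (i-k) : ℚ)) * ((-1:ℚ)^(m-k-1) * ((m-j).choose (k-j) : ℚ))
      = if i = j then 1 else 0 := by
  rw [← Finset.Ico_add_one_right_eq_Icc, Finset.sum_Ico_eq_sum_range]
  set n := i - j with hn
  have hrange : i + 1 - j = n + 1 := by omega
  rw [hrange]
  have step : ∀ t ∈ Finset.range (n+1),
      ((-1:ℚ)^(m-i-1) * ((m-(j+t)).choose (i-(j+t)) : ℚ)) *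
        ((-1:ℚ)^(m-(j+t)-1) * ((m-j).choose ((j+t)-j) : ℚ))
      = (((m-j).choose n : ℚ) * (-1:ℚ)^n) * ((-1:ℚ)^t * (n.choose t : ℚ)) := by
    intro t ht
    have ht' : t ≤ n := by simpa using Nat.lt_succ_iff.mp (Finset.mem_range.mp ht)
    have e1 : (j+t) - j = t := by omega
    have e2 : m - (j+t) = (m - j) - t := by omega
    have e3 : i - (j+t) = n - t := by omega
    have e4 : m - (j+t) - 1 = (m - i - 1) + (n - t) := by omega
    rw [e1, e4, e2, e3, pow_add]
    have hid : (m-j).choose n * n.choose t = (m-j).choose t * ((m-j) - t).choose (n - t) :=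
      Nat.choose_mul ht'
    have hidQ : ((m-j).choose n : ℚ) * (n.choose t : ℚ)
        = ((m-j).choose t : ℚ) * (((m-j) - t).choose (n - t) : ℚ) := by exact_mod_cast hid
    have hs2 : ((-1:ℚ))^(m-i-1) * (-1:ℚ)^(m-i-1) = 1 := by
      rw [← pow_add]; exact Even.neg_one_pow ⟨m-i-1, rfl⟩
    have hsign : ((-1:ℚ))^(n-t) = (-1:ℚ)^n * (-1:ℚ)^t := by
      have h1 : ((-1:ℚ))^(n-t) * (-1:ℚ)^t = (-1:ℚ)^n := by
        rw [← pow_add]; congr 1; omega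
      have h2 : ((-1:ℚ))^t * (-1:ℚ)^t = 1 := by
        rw [← pow_add]; exact Even.neg_one_pow ⟨t, rfl⟩
      calc ((-1:ℚ))^(n-t) = ((-1:ℚ))^(n-t) * (((-1:ℚ))^t * (-1:ℚ)^t) := by rw [h2, mul_one]
        _ = (((-1:ℚ))^(n-t) * (-1:ℚ)^t) * (-1:ℚ)^t := by ring
        _ = (-1:ℚ)^n * (-1:ℚ)^t := by rw [h1]
    rw [hsign]
    linear_combination ((-1:ℚ)^n * (-1:ℚ)^t * (((m-j)-t).choose (n-t) : ℚ) * (((m-j)).choose t : ℚ)) * hs2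
      - ((-1:ℚ)^n * (-1:ℚ)^t) * hidQ
  rw [Finset.sum_congr rfl step, ← Finset.mul_sum]
  have halt : ∑ t ∈ Finset.range (n+1), ((-1:ℚ)^t * (n.choose t : ℚ))
      = if n = 0 then 1 else 0 := by
    have h2 := Int.alternating_sum_range_choose (n := n)
    have h3 : ((∑ t ∈ Finset.range (n+1), ((-1:ℤ)^t * (n.choose t : ℤ)) : ℤ) : ℚ)
        = if n = 0 then 1 else 0 := by
      rw [h2]; split <;> simp
    push_cast at h3
    convert h3 using 1
  rw [halt]
  by_cases h0 : n = 0
  · have : i = j := by omega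
    simp [h0, this]
  · have : ¬ (i = j) := by omega
    simp [h0, this]

lemma matAQ_mul_self (m : ℕ) : matAQ m * matAQ m = 1 := by
  ext i j
  rw [Matrix.mul_apply]
  set F : ℕ → ℚ := fun k =>
    (if k ≤ (i:ℕ) then (-1:ℚ)^(m-(i:ℕ)-1) * ((m-k).choose ((i:ℕ)-k) : ℚ) else 0) *
    (if (j:ℕ) ≤ k then (-1:ℚ)^(m-k-1) * ((m-(j:ℕ)).choose (k-(j:ℕ)) : ℚ) else 0) with hF
  have hFk : ∀ k : Fin m, matAQ m i k * matAQ m k j = F (k:ℕ) := by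
    intro k; simp only [matAQ, hF]
  rw [Finset.sum_congr rfl (fun k _ => hFk k), Fin.sum_univ_eq_sum_range F m]
  by_cases hj : (j:ℕ) ≤ (i:ℕ)
  · have hsub : Finset.Icc (j:ℕ) (i:ℕ) ⊆ Finset.range m := by
      intro k hk
      simp only [Finset.mem_Icc] at hk
      exact Finset.mem_range.mpr (lt_of_le_of_lt hk.2 i.isLt)
    rw [← Finset.sum_subset hsub]
    · have : ∑ k ∈ Finset.Icc (j:ℕ) (i:ℕ), F k
          = ∑ k ∈ Finset.Icc (j:ℕ) (i:ℕ),
            ((-1:ℚ)^(m-(i:ℕ)-1) * ((m-k).choose ((i:ℕ)-k) : ℚ)) *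
            ((-1:ℚ)^(m-k-1) * ((m-(j:ℕ)).choose (k-(j:ℕ)) : ℚ)) := by
        refine Finset.sum_congr rfl fun k hk => ?_
        simp only [Finset.mem_Icc] at hk
        simp [hF, hk.1, hk.2]
      rw [this, keySum m (i:ℕ) (j:ℕ) i.isLt hj]
      rcases eq_or_ne i j with h | h
      · simp [h, Matrix.one_apply, Fin.ext_iff]
      · have : ¬((i:ℕ) = (j:ℕ)) := fun hc => h (Fin.ext hc)
        simp [Matrix.one_apply, h, this]
    · intro k _ hk
      simp only [Finset.mem_Icc, not_and_or, not_le] at hk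
      rcases hk with hk | hk
      · have h1 : ¬ ((j:ℕ) ≤ k) := by omega
        simp [hF, h1]
      · have h1 : ¬ (k ≤ (i:ℕ)) := by omega
        simp [hF, h1]
  · have hij : i ≠ j := by rintro rfl; exact hj le_rfl
    rw [Matrix.one_apply_ne hij]
    refine Finset.sum_eq_zero fun k _ => ?_
    by_cases h1 : k ≤ (i:ℕ)
    · have : ¬ ((j:ℕ) ≤ k) := by omega
      simp [hF, this]
    · simp [hF, h1]

lemma trace_matAQ (m : ℕ) : Matrix.trace (matAQ m) = if Even m then 0 else 1 := by
  rw [Matrix.trace]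
  have : ∀ k : Fin m, Matrix.diag (matAQ m) k = (-1:ℚ)^(m-1-(k:ℕ)) := by
    intro k
    simp only [Matrix.diag, matAQ, le_refl, if_true, Nat.sub_self, Nat.choose_zero_right]
    rw [Nat.cast_one, mul_one]
    congr 1
    omega
  rw [Finset.sum_congr rfl (fun k _ => this k),
    Fin.sum_univ_eq_sum_range (fun k => (-1:ℚ)^(m-1-k)) m,
    Finset.sum_range_reflect (fun k => (-1:ℚ)^k) m]
  exact neg_one_geom_sum

theorem stmt14 (m : ℕ) (hm : 1 ≤ m) :
    Module.finrank ℚ (LinearMap.ker (Matrix.mulVecLin (Matrix.transpose (matAQ m) - 1))) = (m + 1) / 2 := by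
  set T : (Fin m → ℚ) →ₗ[ℚ] (Fin m → ℚ) := Matrix.mulVecLin (Matrix.transpose (matAQ m)) with hT
  have hTT : T ∘ₗ T = LinearMap.id := by
    rw [hT, ← Matrix.mulVecLin_mul, ← Matrix.transpose_mul, matAQ_mul_self,
      Matrix.transpose_one, Matrix.mulVecLin_one]
  set p := LinearMap.ker (Matrix.mulVecLin ((matAQ m)ᵀ - 1)) with hp
  have hkerT : Matrix.mulVecLin ((matAQ m)ᵀ - 1) = T - LinearMap.id := by
    ext x i
    simp [Matrix.mulVecLin, Matrix.sub_mulVec, hT, Matrix.one_apply, Pi.single_apply, eq_comm]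
  set P : (Fin m → ℚ) →ₗ[ℚ] (Fin m → ℚ) := (2:ℚ)⁻¹ • (T + LinearMap.id) with hP
  have hTTapp : ∀ x, T (T x) = x := by
    intro x
    have := congrFun (congrArg DFunLike.coe hTT) x
    simpa using this
  have hproj : LinearMap.IsProj p P := by
    constructor
    · intro x
      rw [hp, LinearMap.mem_ker, hkerT]
      simp only [hP, LinearMap.sub_apply, LinearMap.smul_apply, LinearMap.add_apply,
        LinearMap.id_apply, map_smul, map_add, hTTapp]
      rw [sub_add_sub_cancel, sub_self, smul_zero]
    · intro x hx
      rw [hp, LinearMap.mem_ker, hkerT] at hx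
      have hxT : T x = x := by
        have h' : T x - x = 0 := by simpa using hx
        exact sub_eq_zero.mp h'
      simp only [hP, LinearMap.smul_apply, LinearMap.add_apply, LinearMap.id_apply, hxT]
      rw [← two_smul ℚ x, smul_smul]
      norm_num
  have htr : LinearMap.trace ℚ (Fin m → ℚ) P = (Module.finrank ℚ p : ℚ) := hproj.trace
  have htrT : LinearMap.trace ℚ (Fin m → ℚ) T = if Even m then 0 else 1 := by
    rw [hT, ← Matrix.toLin'_apply',
      LinearMap.trace_eq_matrix_trace ℚ (Pi.basisFun ℚ (Fin m)),
      LinearMap.toMatrix_eq_toMatrix', LinearMap.toMatrix'_toLin',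
      Matrix.trace_transpose, trace_matAQ]
  have htrid : LinearMap.trace ℚ (Fin m → ℚ) (LinearMap.id : (Fin m → ℚ) →ₗ[ℚ] (Fin m → ℚ)) = m := by
    rw [LinearMap.trace_id, Module.finrank_fin_fun]
  have htrP : (Module.finrank ℚ p : ℚ) = 2⁻¹ * ((if Even m then (0:ℚ) else 1) + m) := by
    rw [← htr, hP, map_smul, map_add, htrT, htrid, smul_eq_mul]
  have key : (Module.finrank ℚ p) * 2 = (if Even m then 0 else 1) + m := by
    have h2 : (Module.finrank ℚ p : ℚ) * 2 = (if Even m then (0:ℚ) else 1) + m := by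
      rw [htrP]; ring
    by_cases hEv : Even m
    · rw [if_pos hEv] at h2 ⊢
      exact_mod_cast h2
    · rw [if_neg hEv] at h2 ⊢
      exact_mod_cast h2
  have hm2 := Nat.even_iff (n := m)
  by_cases hEv : Even m
  · rw [if_pos hEv] at key
    have := hm2.mp hEv
    omega
  · rw [if_neg hEv] at key
    have : ¬ (m % 2 = 0) := fun h => hEv (hm2.mpr h)
    omega
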